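/- Under the hypotheses below (in particular k² ≠ conj(k)², Δ⁺ ≠ 0, Δ⁻ ≠ 0), for each ε ∈ {+1,−1} one has the 2×2 matrix identity P_ε·[ (4k·conj(k)/d²)·|y⟩⟨z| + (2k/d)·(|ỹ⟩⟨z| + |y⟩⟨z̃|) ]·P_{−ε} = −(4k²/d²)·P_ε·|z⟩⟨y|·P_{−ε}, where d = k² − conj(k)² and P_ε = (I+εσ₃)/2. -/
import Mathlib


open Matrix Complex ComplexConjugate

noncomputable section

abbrev M2 := Matrix (Fin 2) (Fin 2) ℂ
abbrev Vec2 := Matrix (Fin 2) (Fin 1) ℂ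

def sigma3 : M2 := !![1, 0; 0, -1]
def sigma2 : M2 := !![0, -Complex.I; Complex.I, 0]

/-- ⟨u|M|v⟩ = u†Mv -/
def qform (u : Vec2) (M : M2) (v : Vec2) : ℂ := (uᴴ * M * v) 0 0

def a11 (k : ℂ) (y : Vec2) (ε : ℂ) : ℂ :=
  k * qform y (1 + ε • sigma3) y + conj k * qform y (1 - ε • sigma3) y

def a12 (k : ℂ) (y yt : Vec2) (ε : ℂ) : ℂ :=
  k * qform y (1 + ε • sigma3) yt + conj k * qform y (1 - ε • sigma3) yt

def a21 (k : ℂ) (y yt : Vec2) (ε : ℂ) : ℂ :=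
  k * qform yt (1 + ε • sigma3) y + conj k * qform yt (1 - ε • sigma3) y

def a22 (k : ℂ) (yt : Vec2) (ε : ℂ) : ℂ :=
  k * qform yt (1 + ε • sigma3) yt + conj k * qform yt (1 - ε • sigma3) yt

def b11 (k : ℂ) (y : Vec2) (ε : ℂ) : ℂ :=
  (k ^ 2 + (conj k) ^ 2) * qform y (1 + ε • sigma3) y
    + 2 * k * conj k * qform y (1 - ε • sigma3) y

def b12 (k : ℂ) (y yt : Vec2) (ε : ℂ) : ℂ :=
  (k ^ 2 + (conj k) ^ 2) * qform y (1 + ε • sigma3) yt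
    + 2 * k * conj k * qform y (1 - ε • sigma3) yt

def b21 (k : ℂ) (y yt : Vec2) (ε : ℂ) : ℂ :=
  (k ^ 2 + (conj k) ^ 2) * qform yt (1 + ε • sigma3) y
    + 2 * k * conj k * qform yt (1 - ε • sigma3) y

def c11 (k : ℂ) (y : Vec2) (ε : ℂ) : ℂ :=
  (k ^ 3 + 3 * k * (conj k) ^ 2) * qform y (1 + ε • sigma3) y
    + ((conj k) ^ 3 + 3 * conj k * k ^ 2) * qform y (1 - ε • sigma3) y

def Δf (k : ℂ) (y yt : Vec2) (ε : ℂ) : ℂ :=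
  (k ^ 2 - (conj k) ^ 2) ^ 2
      * (a21 k y yt ε * a12 k y yt ε - a11 k y ε * a22 k yt ε)
    + 2 * a11 k y ε * c11 k y (-ε) - b11 k y ε * b11 k y (-ε)
    + (k ^ 2 - (conj k) ^ 2)
      * (a21 k y yt ε * b11 k y (-ε) - a12 k y yt ε * b11 k y ε
          + a11 k y ε * (b12 k y yt ε - b21 k y yt (-ε)))

/-- P_ε = (I+εσ₃)/2 -/
def Pe (ε : ℂ) : M2 := (1 / 2 : ℂ) • (1 + ε • sigma3)

def dd (k : ℂ) : ℂ := k ^ 2 - (conj k) ^ 2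

/-- Λ = diag(−d³a₁₁⁺/Δ⁺, −d³a₁₁⁻/Δ⁻) -/
def Lam (k : ℂ) (y yt : Vec2) : M2 :=
  !![-(dd k) ^ 3 * a11 k y 1 / Δf k y yt 1, 0;
     0, -(dd k) ^ 3 * a11 k y (-1) / Δf k y yt (-1)]

/-- Ω = diag(d²(d·a₁₂⁺ + b₁₁⁻)/Δ⁺, d²(d·a₁₂⁻ + b₁₁⁺)/Δ⁻) -/
def Om (k : ℂ) (y yt : Vec2) : M2 :=
  !![(dd k) ^ 2 * (dd k * a12 k y yt 1 + b11 k y (-1)) / Δf k y yt 1, 0;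
     0, (dd k) ^ 2 * (dd k * a12 k y yt (-1) + b11 k y 1) / Δf k y yt (-1)]

/-- Λ̃ = diag(d²(d·a₂₁⁺ − b₁₁⁺)/Δ⁺, d²(d·a₂₁⁻ − b₁₁⁻)/Δ⁻) -/
def Lamt (k : ℂ) (y yt : Vec2) : M2 :=
  !![(dd k) ^ 2 * (dd k * a21 k y yt 1 - b11 k y 1) / Δf k y yt 1, 0;
     0, (dd k) ^ 2 * (dd k * a21 k y yt (-1) - b11 k y (-1)) / Δf k y yt (-1)]

/-- Ω̃ = diag(d(−d²a₂₂⁺ + d(b₁₂⁺−b₂₁⁻) + 2c₁₁⁻)/Δ⁺, d(−d²a₂₂⁻ + d(b₁₂⁻−b₂₁⁺) + 2c₁₁⁺)/Δ⁻) -/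
def Omt (k : ℂ) (y yt : Vec2) : M2 :=
  !![dd k * (-(dd k) ^ 2 * a22 k yt 1 + dd k * (b12 k y yt 1 - b21 k y yt (-1))
        + 2 * c11 k y (-1)) / Δf k y yt 1, 0;
     0, dd k * (-(dd k) ^ 2 * a22 k yt (-1) + dd k * (b12 k y yt (-1) - b21 k y yt 1)
        + 2 * c11 k y 1) / Δf k y yt (-1)]

/-- z = Λ·ỹ + Ω·y -/
def zv (k : ℂ) (y yt : Vec2) : Vec2 := Lam k y yt * yt + Om k y yt * y

/-- z̃ = Λ̃·ỹ + Ω̃·y -/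
def ztv (k : ℂ) (y yt : Vec2) : Vec2 := Lamt k y yt * yt + Omt k y yt * y


section ConjLemmas
variable (k : ℂ) (y yt : Vec2)

lemma cj_a11_p : conj (a11 k y 1) = a11 k y (-1) := by
  simp [a11, qform, sigma3, Matrix.mul_apply, Fin.sum_univ_two, Matrix.one_apply, map_ofNat]; ring
lemma cj_a11_m : conj (a11 k y (-1)) = a11 k y 1 := by
  simp [a11, qform, sigma3, Matrix.mul_apply, Fin.sum_univ_two, Matrix.one_apply, map_ofNat]; ring
lemma cj_a12_p : conj (a12 k y yt 1) = a21 k y yt (-1) := by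
  simp [a12, a21, qform, sigma3, Matrix.mul_apply, Fin.sum_univ_two, Matrix.one_apply, map_ofNat]; ring
lemma cj_a12_m : conj (a12 k y yt (-1)) = a21 k y yt 1 := by
  simp [a12, a21, qform, sigma3, Matrix.mul_apply, Fin.sum_univ_two, Matrix.one_apply, map_ofNat]; ring
lemma cj_a21_p : conj (a21 k y yt 1) = a12 k y yt (-1) := by
  simp [a12, a21, qform, sigma3, Matrix.mul_apply, Fin.sum_univ_two, Matrix.one_apply, map_ofNat]; ring
lemma cj_a21_m : conj (a21 k y yt (-1)) = a12 k y yt 1 := by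
  simp [a12, a21, qform, sigma3, Matrix.mul_apply, Fin.sum_univ_two, Matrix.one_apply, map_ofNat]; ring
lemma cj_a22_p : conj (a22 k yt 1) = a22 k yt (-1) := by
  simp [a22, qform, sigma3, Matrix.mul_apply, Fin.sum_univ_two, Matrix.one_apply, map_ofNat]; ring
lemma cj_a22_m : conj (a22 k yt (-1)) = a22 k yt 1 := by
  simp [a22, qform, sigma3, Matrix.mul_apply, Fin.sum_univ_two, Matrix.one_apply, map_ofNat]; ring
lemma cj_b11_p : conj (b11 k y 1) = b11 k y 1 := by
  simp [b11, qform, sigma3, Matrix.mul_apply, Fin.sum_univ_two, Matrix.one_apply, map_ofNat]; ring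
lemma cj_b11_m : conj (b11 k y (-1)) = b11 k y (-1) := by
  simp [b11, qform, sigma3, Matrix.mul_apply, Fin.sum_univ_two, Matrix.one_apply, map_ofNat]; ring
lemma cj_b12_p : conj (b12 k y yt 1) = b21 k y yt 1 := by
  simp [b12, b21, qform, sigma3, Matrix.mul_apply, Fin.sum_univ_two, Matrix.one_apply, map_ofNat]; ring
lemma cj_b12_m : conj (b12 k y yt (-1)) = b21 k y yt (-1) := by
  simp [b12, b21, qform, sigma3, Matrix.mul_apply, Fin.sum_univ_two, Matrix.one_apply, map_ofNat]; ring
lemma cj_b21_p : conj (b21 k y yt 1) = b12 k y yt 1 := by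
  simp [b12, b21, qform, sigma3, Matrix.mul_apply, Fin.sum_univ_two, Matrix.one_apply, map_ofNat]; ring
lemma cj_b21_m : conj (b21 k y yt (-1)) = b12 k y yt (-1) := by
  simp [b12, b21, qform, sigma3, Matrix.mul_apply, Fin.sum_univ_two, Matrix.one_apply, map_ofNat]; ring
lemma cj_c11_p : conj (c11 k y 1) = c11 k y (-1) := by
  simp [c11, qform, sigma3, Matrix.mul_apply, Fin.sum_univ_two, Matrix.one_apply, map_ofNat]; ring
lemma cj_c11_m : conj (c11 k y (-1)) = c11 k y 1 := by
  simp [c11, qform, sigma3, Matrix.mul_apply, Fin.sum_univ_two, Matrix.one_apply, map_ofNat]; ring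
lemma cj_dd : conj (dd k) = -dd k := by
  simp only [dd, _root_.map_sub, _root_.map_pow, Complex.conj_conj]; ring

lemma cj_Delta_p : conj (Δf k y yt 1) = Δf k y yt (-1) := by
  simp only [Δf, _root_.map_add, _root_.map_sub, _root_.map_mul, _root_.map_pow, _root_.map_ofNat, Complex.conj_conj, neg_neg,
    cj_a11_p, cj_a11_m, cj_a12_p, cj_a21_p, cj_a22_p, cj_b11_p, cj_b11_m,
    cj_b12_p, cj_b21_m, cj_c11_p, cj_c11_m]
  ring
lemma cj_Delta_m : conj (Δf k y yt (-1)) = Δf k y yt 1 := by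
  simp only [Δf, _root_.map_add, _root_.map_sub, _root_.map_mul, _root_.map_pow, _root_.map_ofNat, Complex.conj_conj, neg_neg,
    cj_a11_p, cj_a11_m, cj_a12_m, cj_a21_m, cj_a22_m, cj_b11_p, cj_b11_m,
    cj_b12_m, cj_b21_p, cj_c11_p, cj_c11_m]
  ring
end ConjLemmas

set_option maxHeartbeats 4000000 in
theorem lemma3_first (k : ℂ) (hk : k ^ 2 ≠ (conj k) ^ 2) (y yt : Vec2)
    (hΔp : Δf k y yt 1 ≠ 0) (hΔm : Δf k y yt (-1) ≠ 0)
    (ε : ℂ) (hε : ε = 1 ∨ ε = -1) :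
    Pe ε * ((4 * k * conj k / (dd k) ^ 2) • (y * (zv k y yt)ᴴ)
        + (2 * k / dd k) • (yt * (zv k y yt)ᴴ + y * (ztv k y yt)ᴴ)) * Pe (-ε)
      = (-(4 * k ^ 2) / (dd k) ^ 2) • (Pe ε * (zv k y yt * yᴴ) * Pe (-ε)) := by
  
  have hd : dd k ≠ 0 := sub_ne_zero.mpr hk
  rcases hε with rfl | rfl <;>
  · ext i j
    fin_cases i <;> fin_cases j <;>
      simp only [zv, ztv, Lam, Om, Lamt, Omt, Pe, sigma3, Matrix.mul_apply,
        Matrix.add_apply, Matrix.smul_apply, Matrix.conjTranspose_apply,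
        Fin.sum_univ_two, Fin.sum_univ_one, smul_eq_mul] <;>
      simp [cj_a11_p, cj_a11_m, cj_a12_p, cj_a12_m, cj_a21_p,
        cj_a21_m, cj_a22_p, cj_a22_m, cj_b11_p, cj_b11_m, cj_b12_p, cj_b12_m,
        cj_b21_p, cj_b21_m, cj_c11_p, cj_c11_m, cj_dd, cj_Delta_p, cj_Delta_m] <;>
      simp only [a11, a12, a21, a22, b11, b12, b21, c11, qform, sigma3,
        Matrix.mul_apply, Fin.sum_univ_two, Fin.sum_univ_one, Matrix.one_apply] <;>
      simp <;>
      field_simp [hΔp, hΔm, hd] <;>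
      (try rw [div_eq_iff (by simp [hΔp, hΔm, hd])]) <;>
      ring1
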